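/- Let (a_n)_{n≥0} be the sequence a_n = (−1)^n · n. Then for every p ∈ (0,1) the sequence of p-binomial means (a^p_n)_{n≥0} converges to 0, but the sequence of arithmetic means (a*_n)_{n≥0} does not converge. -/

import Mathlib

open Filter Finset

/-- The `p`-binomial mean of a sequence. -/
noncomputable def binMean (p : ℝ) (a : ℕ → ℝ) (n : ℕ) : ℝ :=
  ∑ i ∈ Finset.range (n + 1), (n.choose i : ℝ) * p ^ i * (1 - p) ^ (n - i) * a i

/-- The arithmetic (Cesàro) mean of a sequence. -/
noncomputable def cesaroMean (a : ℕ → ℝ) (n : ℕ) : ℝ :=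
  (1 / (n + 1 : ℝ)) * ∑ i ∈ Finset.range (n + 1), a i

lemma binMean_eq (p : ℝ) (a : ℕ → ℝ) (ha : ∀ n, a n = (-1 : ℝ) ^ n * n) (m : ℕ) :
    binMean p a (m + 1) = (m + 1 : ℝ) * (-p) * (1 - 2 * p) ^ m := by
  have key : ∀ n i : ℕ, ((n.choose i : ℝ)) * p ^ i * (1 - p) ^ (n - i) * a i
      = (n.choose i : ℝ) * (-p) ^ i * (1 - p) ^ (n - i) * i := by
    intro n i
    rw [ha i, neg_pow]
    ring
  unfold binMean
  simp only [key]
  rw [Finset.sum_range_succ']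
  simp only [Nat.cast_zero, mul_zero, add_zero]
  have step : ∀ j : ℕ, ((m + 1).choose (j + 1) : ℝ) * (-p) ^ (j + 1) * (1 - p) ^ (m + 1 - (j + 1)) * (j + 1 : ℕ)
      = ((m + 1 : ℝ) * (-p)) * ((-p) ^ j * (1 - p) ^ (m - j) * (m.choose j : ℝ)) := by
    intro j
    have h : ((m + 1).choose (j + 1) : ℝ) * (j + 1 : ℕ) = (m + 1 : ℝ) * (m.choose j : ℝ) := by
      have hnat : (m + 1).choose (j + 1) * (j + 1) = (m + 1) * m.choose j :=
        (Nat.add_one_mul_choose_eq m j).symm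
      exact_mod_cast congrArg (Nat.cast : ℕ → ℝ) hnat
    have h2 : m + 1 - (j + 1) = m - j := by omega
    rw [h2]
    calc ((m + 1).choose (j + 1) : ℝ) * (-p) ^ (j + 1) * (1 - p) ^ (m - j) * (j + 1 : ℕ)
        = (((m + 1).choose (j + 1) : ℝ) * (j + 1 : ℕ)) * ((-p) ^ (j+1) * (1 - p) ^ (m - j)) := by ring
      _ = ((m + 1 : ℝ) * (m.choose j : ℝ)) * ((-p) ^ (j+1) * (1 - p) ^ (m - j)) := by rw [h]
      _ = ((m + 1 : ℝ) * (-p)) * ((-p) ^ j * (1 - p) ^ (m - j) * (m.choose j : ℝ)) := by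
          rw [pow_succ]; ring
  simp only [step]
  rw [← Finset.mul_sum, ← add_pow]
  ring_nf

lemma sum_signed (a : ℕ → ℝ) (ha : ∀ n, a n = (-1 : ℝ) ^ n * n) (n : ℕ) :
    ∑ i ∈ Finset.range (n + 1), a i = ((-1 : ℝ) ^ n * (2 * n + 1) - 1) / 4 := by
  induction n with
  | zero => simp [ha]
  | succ m ih =>
    rw [Finset.sum_range_succ, ih, ha]
    push_cast
    rw [pow_succ]
    ring

theorem signed_linear_seq
    (a : ℕ → ℝ) (ha : ∀ n, a n = (-1 : ℝ) ^ n * n) :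
    (∀ p : ℝ, 0 < p → p < 1 → Tendsto (binMean p a) atTop (nhds 0)) ∧
    ¬ ∃ l : ℝ, Tendsto (cesaroMean a) atTop (nhds l) := by
  constructor
  · intro p hp hp1
    rw [← Filter.tendsto_add_atTop_iff_nat 1]
    have hr : |1 - 2 * p| < 1 := by rw [abs_lt]; constructor <;> linarith
    have h1 : Tendsto (fun n : ℕ => (n : ℝ) * (1 - 2 * p) ^ n) atTop (nhds 0) :=
      tendsto_self_mul_const_pow_of_abs_lt_one hr
    have h2 : Tendsto (fun n : ℕ => (1 - 2 * p) ^ n) atTop (nhds 0) :=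
      tendsto_pow_atTop_nhds_zero_of_abs_lt_one hr
    have h3 : Tendsto (fun n : ℕ => ((n : ℝ) * (1 - 2 * p) ^ n + (1 - 2 * p) ^ n) * (-p))
        atTop (nhds ((0 + 0) * (-p))) := ((h1.add h2).mul_const _)
    simp only [add_zero, zero_mul] at h3
    apply h3.congr
    intro n
    rw [binMean_eq p a ha n]
    ring
  · rintro ⟨l, hl⟩
    have hc : ∀ n, cesaroMean a n = ((-1 : ℝ) ^ n * (2 * n + 1) - 1) / (4 * (n + 1)) := by
      intro n
      unfold cesaroMean
      rw [sum_signed a ha]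
      have : (n : ℝ) + 1 ≠ 0 := by positivity
      field_simp
    -- odd subsequence is constantly -1/2
    have hodd : Tendsto (fun k : ℕ => cesaroMean a (2 * k + 1)) atTop (nhds (-1/2)) := by
      have : ∀ k : ℕ, cesaroMean a (2 * k + 1) = -1/2 := by
        intro k
        rw [hc]
        rw [pow_succ, pow_mul]
        push_cast
        simp only [neg_one_sq, one_pow]
        have : (4 : ℝ) * (2 * k + 1 + 1) ≠ 0 := by positivity
        field_simp
        ring
      simp only [this]
      exact tendsto_const_nhds
    have heven : Tendsto (fun k : ℕ => cesaroMean a (2 * k)) atTop (nhds (1/2)) := by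
      have heq : ∀ k : ℕ, cesaroMean a (2 * k) = (k : ℝ) / (2 * k + 1) := by
        intro k
        rw [hc, pow_mul]
        push_cast
        simp only [neg_one_sq, one_pow]
        have h4 : (4 : ℝ) * (2 * k + 1) ≠ 0 := by positivity
        have h2 : (2 : ℝ) * k + 1 ≠ 0 := by positivity
        field_simp
        ring
      simp only [heq]
      have : Tendsto (fun k : ℕ => (k : ℝ) / (2 * k + 1)) atTop (nhds (1/2)) := by
        have hden : Tendsto (fun k : ℕ => 2 + 1 / (k : ℝ)) atTop (nhds 2) := by
          have := (tendsto_const_nhds :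
            Tendsto (fun _ : ℕ => (2 : ℝ)) atTop (nhds 2)).add
            tendsto_one_div_atTop_nhds_zero_nat
          simpa using this
        have := (tendsto_const_nhds :
          Tendsto (fun _ : ℕ => (1 : ℝ)) atTop (nhds 1)).div hden two_ne_zero
        apply this.congr'
        filter_upwards [eventually_gt_atTop 0] with k hk
        have hk' : (k : ℝ) ≠ 0 := Nat.cast_ne_zero.mpr hk.ne'
        simp only [Pi.div_apply]
        field_simp
      simpa using this
    have t1 : Tendsto (fun k : ℕ => 2 * k + 1) atTop atTop :=
      tendsto_atTop_mono (fun k => (by omega : k ≤ 2 * k + 1)) tendsto_id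
    have t2 : Tendsto (fun k : ℕ => 2 * k) atTop atTop :=
      tendsto_atTop_mono (fun k => (by omega : k ≤ 2 * k)) tendsto_id
    have h1 : Tendsto (fun k : ℕ => cesaroMean a (2 * k + 1)) atTop (nhds l) := hl.comp t1
    have h2 : Tendsto (fun k : ℕ => cesaroMean a (2 * k)) atTop (nhds l) := hl.comp t2
    have e1 : l = -1/2 := tendsto_nhds_unique h1 hodd
    have e2 : l = 1/2 := tendsto_nhds_unique h2 heven
    linarith
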